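/- Let A ∈ SL_n(ℂ) be a non-scalar matrix. Then A is similar (conjugate in GL_n(ℂ)) to a product L·U where L is lower unitriangular and U is upper unitriangular. -/

import Mathlib

open Matrix
namespace Stmt15

def e (n : ℕ) : Fin 1 ⊕ Fin n ≃ Fin (n + 1) where
  toFun := Sum.elim (fun _ => 0) Fin.succ
  invFun := fun i => Fin.cases (Sum.inl 0) Sum.inr i
  left_inv := by
    rintro (x | k)
    · simp [Subsingleton.elim x 0]
    · simp
  right_inv := by
    intro i
    induction i using Fin.cases <;> simp

@[simp] lemma e_symm_zero (n : ℕ) : (e n).symm 0 = Sum.inl 0 := by simp [e]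
@[simp] lemma e_symm_succ (n : ℕ) (k : Fin n) : (e n).symm k.succ = Sum.inr k := by simp [e]

def rx {n : ℕ} (M : Matrix (Fin 1 ⊕ Fin n) (Fin 1 ⊕ Fin n) ℂ) :
    Matrix (Fin (n + 1)) (Fin (n + 1)) ℂ := Matrix.reindex (e n) (e n) M

lemma rx_mul {n : ℕ} (M N : Matrix (Fin 1 ⊕ Fin n) (Fin 1 ⊕ Fin n) ℂ) :
    rx M * rx N = rx (M * N) := by
  simp only [rx, Matrix.reindex_apply]
  exact Matrix.submatrix_mul_equiv M N _ _ _

@[simp] lemma rx_one {n : ℕ} : rx (1 : Matrix (Fin 1 ⊕ Fin n) (Fin 1 ⊕ Fin n) ℂ) = 1 := by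
  simp [rx]

@[simp] lemma rx_det {n : ℕ} (M : Matrix (Fin 1 ⊕ Fin n) (Fin 1 ⊕ Fin n) ℂ) :
    (rx M).det = M.det := by
  simp [rx]

@[simp] lemma rx_apply {n : ℕ} (M : Matrix (Fin 1 ⊕ Fin n) (Fin 1 ⊕ Fin n) ℂ)
    (i j : Fin (n + 1)) : rx M i j = M ((e n).symm i) ((e n).symm j) := rfl

lemma exists_noneigen {n : ℕ} (B : Matrix (Fin (n+1)) (Fin (n+1)) ℂ)
    (hns : ¬ ∃ α : ℂ, B = α • 1) :
    ∃ v : Fin (n+1) → ℂ, ∀ a : ℂ, B.mulVec v ≠ a • v := by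
  by_contra h
  push_neg at h
  apply hns
  choose a ha using h
  set c : Fin (n+1) → ℂ := fun i => a (Pi.single i 1) with hc
  have hent : ∀ i j : Fin (n+1), B j i = if j = i then c i else 0 := by
    intro i j
    have := congrFun (ha (Pi.single i 1)) j
    simp only [Matrix.mulVec_single, Pi.smul_apply, smul_eq_mul] at this
    rcases eq_or_ne j i with rfl | hji
    · simpa [Pi.single_eq_same] using this
    · simpa [Pi.single_eq_of_ne hji, hji] using this
  have hcc : ∀ i j : Fin (n+1), c i = c j := by
    intro i j
    rcases eq_or_ne i j with rfl | hij
    · rfl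
    have hw := ha (Pi.single i 1 + Pi.single j 1)
    have hi := congrFun hw i
    have hj := congrFun hw j
    have hmv : ∀ k, B.mulVec (Pi.single i 1 + Pi.single j 1) k = B k i + B k j := by
      intro k
      simp [Matrix.mulVec_add, Matrix.mulVec_single]
    rw [hmv] at hi hj
    rw [hent i i, hent j i] at hi
    rw [hent i j, hent j j] at hj
    simp [hij, hij.symm, Pi.single_eq_same, Pi.single_eq_of_ne hij,
      Pi.single_eq_of_ne hij.symm] at hi hj
    rw [hi, hj]
  refine ⟨c 0, ?_⟩
  ext x y
  rw [hent y x]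
  rcases eq_or_ne x y with rfl | hxy
  · simp [Matrix.one_apply, hcc x 0]
  · simp [Matrix.one_apply, hxy]

lemma rx_lower {n : ℕ} {L' : Matrix (Fin n) (Fin n) ℂ} {Y : Matrix (Fin n) (Fin 1) ℂ}
    (h1 : ∀ i j : Fin n, i < j → L' i j = 0) (h2 : ∀ i, L' i i = 1) :
    (∀ i j : Fin (n+1), i < j → rx (fromBlocks 1 0 Y L') i j = 0) ∧
      (∀ i, rx (fromBlocks 1 0 Y L') i i = 1) := by
  constructor
  · intro i j hij
    induction i using Fin.cases with
    | zero =>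
      induction j using Fin.cases with
      | zero => exact absurd hij (lt_irrefl _)
      | succ k => simp
    | succ l =>
      induction j using Fin.cases with
      | zero => exact absurd hij (by simp)
      | succ k =>
        simp only [rx_apply, e_symm_succ, fromBlocks_apply₂₂]
        exact h1 l k (by simpa [Fin.succ_lt_succ_iff] using hij)
  · intro i
    induction i using Fin.cases with
    | zero => simp
    | succ l => simp [h2 l]

lemma rx_upper {n : ℕ} {U' : Matrix (Fin n) (Fin n) ℂ} {X : Matrix (Fin 1) (Fin n) ℂ}
    (h1 : ∀ i j : Fin n, j < i → U' i j = 0) (h2 : ∀ i, U' i i = 1) :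
    (∀ i j : Fin (n+1), j < i → rx (fromBlocks 1 X 0 U') i j = 0) ∧
      (∀ i, rx (fromBlocks 1 X 0 U') i i = 1) := by
  constructor
  · intro i j hij
    induction i using Fin.cases with
    | zero =>
      induction j using Fin.cases with
      | zero => exact absurd hij (lt_irrefl _)
      | succ k => exact absurd hij (by simp)
    | succ l =>
      induction j using Fin.cases with
      | zero => simp
      | succ k =>
        simp only [rx_apply, e_symm_succ, fromBlocks_apply₂₂]
        exact h1 l k (by simpa [Fin.succ_lt_succ_iff] using hij)
  · intro i
    induction i using Fin.cases with
    | zero => simp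
    | succ l => simp [h2 l]
lemma exists_conj_noneigen {n : ℕ} (B : Matrix (Fin (n+1)) (Fin (n+1)) ℂ)
    (hns : ¬ ∃ α : ℂ, B = α • 1) :
    ∃ C Ci : Matrix (Fin (n+1)) (Fin (n+1)) ℂ, C * Ci = 1 ∧ Ci * C = 1 ∧
      ∃ i : Fin (n+1), i ≠ 0 ∧ (Ci * B * C) i 0 ≠ 0 := by
  obtain ⟨v, hv⟩ := exists_noneigen B hns
  have hv0 : v ≠ 0 := by
    intro h
    exact hv 0 (by simp [h])
  obtain ⟨i₀, hvi₀⟩ := Function.ne_iff.mp hv0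
  simp only [Pi.zero_apply] at hvi₀
  set w : Fin (n+1) → ℂ := v - Pi.single i₀ 1 with hw
  set A : Matrix (Fin (n+1)) (Fin (n+1)) ℂ :=
    Matrix.of (fun x y => w x * (Pi.single i₀ 1 : Fin (n+1) → ℂ) y) with hA
  set s : ℂ := -(v i₀)⁻¹ with hs
  have hwi₀ : w i₀ = v i₀ - 1 := by simp [hw]
  have hA2 : A * A = (v i₀ - 1) • A := by
    ext x y
    simp only [Matrix.mul_apply, hA, Matrix.of_apply, Matrix.smul_apply, smul_eq_mul,
      Pi.single_apply, mul_ite, ite_mul, mul_one, mul_zero, zero_mul, one_mul]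
    by_cases hy : y = i₀
    · simp only [hy, if_true]
      rw [Finset.sum_ite_eq' Finset.univ i₀ (fun k => w x * w k)]
      simp [hwi₀]
      ring
    · simp [hy]
  have hcoef : s + 1 + s * (v i₀ - 1) = 0 := by
    rw [hs]
    field_simp
    ring
  set T : Matrix (Fin (n+1)) (Fin (n+1)) ℂ := 1 + A with hT
  set Ti : Matrix (Fin (n+1)) (Fin (n+1)) ℂ := 1 + s • A with hTi
  have expand : ∀ X Y : Matrix (Fin (n+1)) (Fin (n+1)) ℂ,
      (1 + X) * (1 + Y) = 1 + (X + Y + X * Y) := by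
    intro X Y
    noncomm_ring
  have hsum : A + s • A + (s * (v i₀ - 1)) • A = 0 := by
    have : A + s • A + (s * (v i₀ - 1)) • A = (1 + s + s * (v i₀ - 1)) • A := by
      rw [add_smul, add_smul, one_smul]
    rw [this]
    have : (1 : ℂ) + s + s * (v i₀ - 1) = 0 := by linear_combination hcoef
    rw [this, zero_smul]
  have hASA : A * (s • A) = (s * (v i₀ - 1)) • A := by
    rw [Matrix.mul_smul, hA2, smul_smul]
  have hSAA : (s • A) * A = (s * (v i₀ - 1)) • A := by
    rw [Matrix.smul_mul, hA2, smul_smul]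
  have hTTi : T * Ti = 1 := by
    rw [hT, hTi, expand, hASA, hsum, add_zero]
  have hTiT : Ti * T = 1 := by
    rw [hT, hTi, expand, hSAA]
    have : s • A + A + (s * (v i₀ - 1)) • A = 0 := by
      rw [← hsum]; abel
    rw [this, add_zero]
  -- permutation part
  set σ : Equiv.Perm (Fin (n+1)) := Equiv.swap 0 i₀ with hσ
  set Pσ : Matrix (Fin (n+1)) (Fin (n+1)) ℂ := (1 : Matrix _ _ ℂ).submatrix id ⇑σ with hPσ
  set Pσi : Matrix (Fin (n+1)) (Fin (n+1)) ℂ := (1 : Matrix _ _ ℂ).submatrix ⇑σ id with hPσi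
  have hP1 : Pσ * Pσi = 1 := by
    rw [hPσ, hPσi, Matrix.submatrix_mul_equiv (1 : Matrix (Fin (n+1)) (Fin (n+1)) ℂ) 1 id σ id,
      one_mul, Matrix.submatrix_id_id]
  have hP2 : Pσi * Pσ = 1 := by
    have h0 : Pσi = (1 : Matrix (Fin (n+1)) (Fin (n+1)) ℂ).submatrix ⇑σ ⇑(Equiv.refl (Fin (n+1))) := by
      rw [hPσi]; rfl
    have h1 : Pσ = (1 : Matrix (Fin (n+1)) (Fin (n+1)) ℂ).submatrix ⇑(Equiv.refl (Fin (n+1))) ⇑σ := by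
      rw [hPσ]; rfl
    rw [h0, h1, Matrix.submatrix_mul_equiv, one_mul, Matrix.submatrix_one_equiv]
  set C : Matrix (Fin (n+1)) (Fin (n+1)) ℂ := T * Pσ with hC
  set Ci : Matrix (Fin (n+1)) (Fin (n+1)) ℂ := Pσi * Ti with hCi
  have hCCi : C * Ci = 1 := by
    rw [hC, hCi]
    calc T * Pσ * (Pσi * Ti) = T * (Pσ * Pσi) * Ti := by noncomm_ring
    _ = 1 := by rw [hP1, mul_one, hTTi]
  have hCiC : Ci * C = 1 := by
    rw [hC, hCi]
    calc Pσi * Ti * (T * Pσ) = Pσi * (Ti * T) * Pσ := by noncomm_ring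
    _ = 1 := by rw [hTiT, mul_one, hP2]
  have hcol : ∀ x, C x 0 = v x := by
    intro x
    rw [hC, Matrix.mul_apply]
    have : ∀ k, T x k * Pσ k 0 = if k = i₀ then T x i₀ else 0 := by
      intro k
      rw [hPσ]
      simp only [Matrix.submatrix_apply, id_eq, hσ, Equiv.swap_apply_left, Matrix.one_apply]
      rcases eq_or_ne k i₀ with rfl | hk
      · simp
      · simp [hk]
    rw [Finset.sum_congr rfl (fun k _ => this k), Finset.sum_ite_eq' Finset.univ i₀ (fun _ => T x i₀)]
    simp only [Finset.mem_univ, if_true]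
    rw [hT]
    simp only [Matrix.add_apply, Matrix.one_apply, hA, Matrix.of_apply, Pi.single_eq_same, mul_one, hw,
      Pi.sub_apply, Pi.single_apply]
    rcases eq_or_ne x i₀ with rfl | hx
    · simp
    · simp [hx]
  refine ⟨C, Ci, hCCi, hCiC, ?_⟩
  by_contra hno
  push_neg at hno
  set X : Matrix (Fin (n+1)) (Fin (n+1)) ℂ := Ci * B * C with hX
  have hXcol : ∀ i, i ≠ 0 → X i 0 = 0 := hno
  have hCX : C * X = B * C := by
    rw [hX]
    calc C * (Ci * B * C) = (C * Ci) * (B * C) := by noncomm_ring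
    _ = B * C := by rw [hCCi, one_mul]
  have h1 : ∀ x, (C * X) x 0 = v x * X 0 0 := by
    intro x
    rw [Matrix.mul_apply]
    rw [Finset.sum_eq_single_of_mem 0 (Finset.mem_univ _)
      (fun k _ hk => by rw [hXcol k hk, mul_zero])]
    rw [hcol]
  have h2 : ∀ x, (B * C) x 0 = B.mulVec v x := by
    intro x
    rw [Matrix.mul_apply, Matrix.mulVec]
    simp only [dotProduct]
    exact Finset.sum_congr rfl (fun k _ => by rw [hcol])
  apply hv (X 0 0)
  funext x
  have := congrFun (congrFun hCX x) 0
  rw [h1, h2] at this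
  simp only [Pi.smul_apply, smul_eq_mul]
  rw [← this]
  ring

lemma twofunc {m : ℕ} (hm : 1 ≤ m) (a b : Fin (m+2) → ℂ) :
    ∃ w : Fin (m+2) → ℂ, w ≠ 0 ∧ a ⬝ᵥ w = 0 ∧ b ⬝ᵥ w = 0 := by
  by_contra h
  push_neg at h
  set A2 : Matrix (Fin 2) (Fin (m+2)) ℂ := Matrix.of ![a, b] with hA2
  have hinj : Function.Injective A2.mulVecLin := by
    intro x y hxy
    have hz : A2.mulVecLin (x - y) = 0 := by
      rw [map_sub, hxy, sub_self]
    by_contra hne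
    have hxy0 : x - y ≠ 0 := sub_ne_zero.mpr (fun hh => hne (by rw [hh]))
    have ha0 : a ⬝ᵥ (x - y) = 0 := by
      have := congrFun hz 0
      simpa [Matrix.mulVecLin_apply, Matrix.mulVec, hA2] using this
    have hb0 : b ⬝ᵥ (x - y) = 0 := by
      have := congrFun hz 1
      simpa [Matrix.mulVecLin_apply, Matrix.mulVec, hA2] using this
    rcases h (x - y) hxy0 ha0 with hc
    exact hc hb0
  have hrank := LinearMap.finrank_le_finrank_of_injective hinj
  simp only [Module.finrank_pi] at hrank
  simp [Fintype.card_fin] at hrank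
  omega

lemma choice_lemma (m : ℕ) (B : Matrix (Fin (m+2)) (Fin (m+2)) ℂ) (hdet : B.det = 1)
    (i₁ : Fin (m+2)) (hi₁ : i₁ ≠ 0) (hu : B i₁ 0 ≠ 0) :
    ∃ φ : Fin (m+2) → ℂ, φ 0 = 1 ∧ (φ ⬝ᵥ fun k => B k 0) = 1 ∧
      ∀ α : ℂ, α ≠ 1 → α ^ (m+1) = 1 →
        ¬ (∀ i j : Fin (m+1), B i.succ j.succ - B i.succ 0 * (φ ⬝ᵥ fun k => B k j.succ)
            = α * (if i = j then 1 else 0)) := by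
  set u : Fin (m+2) → ℂ := fun k => B k 0 with hudef
  have hu' : u i₁ ≠ 0 := hu
  set φ₀ : Fin (m+2) → ℂ :=
    (Pi.single 0 1 : Fin (m+2) → ℂ) + ((1 - u 0) / u i₁) • (Pi.single i₁ 1 : Fin (m+2) → ℂ) with hφ₀
  have hφ₀0 : φ₀ 0 = 1 := by
    simp [hφ₀, Pi.single_eq_same, Pi.single_eq_of_ne (Ne.symm hi₁)]
  have hφ₀u : φ₀ ⬝ᵥ u = 1 := by
    rw [hφ₀, add_dotProduct, smul_dotProduct, single_dotProduct, single_dotProduct]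
    simp only [one_mul, smul_eq_mul]
    field_simp
    ring
  rcases Nat.eq_zero_or_pos m with hm0 | hm
  · subst hm0
    refine ⟨φ₀, hφ₀0, hφ₀u, ?_⟩
    intro α hα1 hαn _
    exact hα1 (by simpa using hαn)
  -- main case : 1 ≤ m
  set f1 : Fin (m+2) := ⟨1, by omega⟩ with hf1
  set f2 : Fin (m+2) := ⟨2, by omega⟩ with hf2
  set j₂ : Fin (m+2) := if i₁ = f1 then f2 else f1 with hj₂def
  have hf10 : f1 ≠ 0 := by simp [hf1, Fin.ext_iff]
  have hf20 : f2 ≠ 0 := by simp [hf2, Fin.ext_iff]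
  have hf21 : f2 ≠ f1 := by simp [hf1, hf2, Fin.ext_iff]
  have hj₂0 : j₂ ≠ 0 := by
    rw [hj₂def]; split_ifs <;> assumption
  have hj₂i₁ : j₂ ≠ i₁ := by
    rw [hj₂def]; split_ifs with h
    · rw [h]; exact hf21
    · exact fun hh => h hh.symm
  set ψ₀ : Fin (m+2) → ℂ :=
    (Pi.single j₂ 1 : Fin (m+2) → ℂ) - (u j₂ / u i₁) • (Pi.single i₁ 1 : Fin (m+2) → ℂ) with hψ₀
  have hψ₀0 : ψ₀ 0 = 0 := by
    simp [hψ₀, Pi.single_eq_of_ne (Ne.symm hj₂0), Pi.single_eq_of_ne (Ne.symm hi₁)]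
  have hψ₀u : ψ₀ ⬝ᵥ u = 0 := by
    rw [hψ₀, sub_dotProduct, smul_dotProduct, single_dotProduct, single_dotProduct]
    simp only [one_mul, smul_eq_mul]
    field_simp
    ring
  have hψ₀j₂ : ψ₀ j₂ = 1 := by
    simp [hψ₀, Pi.single_eq_same, Pi.single_eq_of_ne hj₂i₁]
  set φt : ℂ → (Fin (m+2) → ℂ) := fun t => φ₀ + t • ψ₀ with hφt
  have hφt0 : ∀ t, φt t 0 = 1 := by
    intro t; simp [hφt, hφ₀0, hψ₀0]
  have hφtu : ∀ t, φt t ⬝ᵥ u = 1 := by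
    intro t
    rw [hφt]
    simp only [add_dotProduct, smul_dotProduct, hφ₀u, hψ₀u, smul_eq_mul, mul_zero, add_zero]
  set cond : ℂ → ℂ → Prop := fun t α =>
    ∀ i j : Fin (m+1), B i.succ j.succ - B i.succ 0 * ((φt t) ⬝ᵥ fun k => B k j.succ)
      = α * (if i = j then 1 else 0) with hconddef
  -- the polynomial det (B - X • 1)
  set p : Polynomial ℂ := (B.map Polynomial.C - (Polynomial.X : Polynomial ℂ) • 1).det with hp
  have hpeval : ∀ α : ℂ, p.eval α = (B - α • 1).det := by
    intro α
    rw [hp]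
    have hmap := RingHom.map_det (Polynomial.evalRingHom α)
      (B.map Polynomial.C - (Polynomial.X : Polynomial ℂ) • 1)
    simp only [Polynomial.coe_evalRingHom] at hmap
    rw [hmap]
    congr 1
    rw [RingHom.mapMatrix_apply]
    ext i j
    simp only [Matrix.map_apply, Matrix.sub_apply, Matrix.smul_apply, smul_eq_mul,
      Matrix.one_apply, Polynomial.coe_evalRingHom, Polynomial.eval_sub, Polynomial.eval_mul,
      Polynomial.eval_C, Polynomial.eval_X, apply_ite (Polynomial.eval α), Polynomial.eval_one,
      Polynomial.eval_zero]
  have hp0 : p ≠ 0 := by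
    intro h
    have h2 := hpeval 0
    rw [h] at h2
    simp [hdet] at h2
  -- uniqueness of t for fixed α
  have hBunit : IsUnit B.det := by rw [hdet]; exact isUnit_one
  have huniq : ∀ α : ℂ, {t : ℂ | cond t α}.Subsingleton := by
    intro α t ht t' ht'
    simp only [Set.mem_setOf_eq, hconddef] at ht ht'
    obtain ⟨ip, hip⟩ : ∃ ip : Fin (m+1), ip.succ = i₁ := ⟨i₁.pred hi₁, Fin.succ_pred i₁ hi₁⟩
    have hρ : ∀ j : Fin (m+1),
        ((φt t) ⬝ᵥ fun k => B k j.succ) = ((φt t') ⬝ᵥ fun k => B k j.succ) := by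
      intro j
      have h1 := ht ip j
      have h2 := ht' ip j
      rw [hip] at h1 h2
      have h3 : B i₁ 0 * ((φt t) ⬝ᵥ fun k => B k j.succ)
          = B i₁ 0 * ((φt t') ⬝ᵥ fun k => B k j.succ) :=
        sub_right_inj.mp (h1.trans h2.symm)
      exact mul_left_cancel₀ hu h3
    have hvmb : ∀ (y : Fin (m+2) → ℂ) (x : Fin (m+2)),
        Matrix.vecMul y B x = y ⬝ᵥ fun k => B k x := by
      intro y x
      simp [Matrix.vecMul, dotProduct]
    have hvm : Matrix.vecMul (φt t - φt t') B = 0 := by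
      rw [Matrix.sub_vecMul]
      funext x
      rw [Pi.sub_apply, hvmb, hvmb, Pi.zero_apply]
      induction x using Fin.cases with
      | zero =>
        rw [show ((φt t) ⬝ᵥ fun k => B k 0) = (φt t) ⬝ᵥ u from rfl,
          show ((φt t') ⬝ᵥ fun k => B k 0) = (φt t') ⬝ᵥ u from rfl, hφtu, hφtu, sub_self]
      | succ j =>
        rw [hρ j, sub_self]
    have hsub0 : φt t - φt t' = 0 := by
      have h1 := congrArg (fun y => Matrix.vecMul y B⁻¹) hvm
      simp only [Matrix.vecMul_vecMul, Matrix.zero_vecMul] at h1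
      rw [Matrix.mul_nonsing_inv B hBunit, Matrix.vecMul_one] at h1
      exact h1
    have h4 := congrFun hsub0 j₂
    simp only [hφt, Pi.sub_apply, Pi.add_apply, Pi.smul_apply, smul_eq_mul, hψ₀j₂, mul_one,
      Pi.zero_apply] at h4
    have : t - t' = 0 := by linear_combination h4
    exact sub_eq_zero.mp this
  -- bad t gives a root of p
  have hroot : ∀ t α, cond t α → p.IsRoot α := by
    intro t α hcond
    simp only [hconddef] at hcond
    obtain ⟨w, hw0, haw, hbw⟩ := twofunc hm (φt t) (fun x => (φt t) ⬝ᵥ fun k => B k x)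
    have hmv : ∀ x, B.mulVec w x = ∑ k, B x k * w k := by
      intro x; simp [Matrix.mulVec, dotProduct]
    have hρ0 : ((φt t) ⬝ᵥ fun k => B k 0) = 1 := hφtu t
    have hsum2 : ∑ j : Fin (m+1), ((φt t) ⬝ᵥ fun k => B k j.succ) * w j.succ = - w 0 := by
      have := hbw
      rw [dotProduct, Fin.sum_univ_succ] at this
      rw [hρ0] at this
      linear_combination this
    have hrow : ∀ ip : Fin (m+1), B.mulVec w ip.succ = α * w ip.succ := by
      intro ip
      rw [hmv, Fin.sum_univ_succ]
      have hterm : ∀ j : Fin (m+1), B ip.succ j.succ * w j.succ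
          = (α * (if ip = j then 1 else 0)) * w j.succ
            + B ip.succ 0 * (((φt t) ⬝ᵥ fun k => B k j.succ) * w j.succ) := by
        intro j
        have := hcond ip j
        have hBij : B ip.succ j.succ
            = α * (if ip = j then 1 else 0) + B ip.succ 0 * ((φt t) ⬝ᵥ fun k => B k j.succ) := by
          linear_combination this
        rw [hBij]; ring
      rw [Finset.sum_congr rfl (fun j _ => hterm j), Finset.sum_add_distrib]
      rw [← Finset.mul_sum, hsum2]
      have hsum1 : ∑ j : Fin (m+1), (α * (if ip = j then 1 else 0)) * w j.succ
          = α * w ip.succ := by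
        calc ∑ j : Fin (m+1), (α * (if ip = j then 1 else 0)) * w j.succ
            = ∑ j : Fin (m+1), if ip = j then α * w j.succ else 0 :=
              Finset.sum_congr rfl (fun j _ => by split_ifs <;> ring)
          _ = α * w ip.succ := by rw [Finset.sum_ite_eq]; simp
      rw [hsum1]
      ring
    have hzero : B.mulVec w 0 = α * w 0 := by
      have hdm := Matrix.dotProduct_mulVec (φt t) B w
      have hvmb2 : Matrix.vecMul (φt t) B = fun x => (φt t) ⬝ᵥ fun k => B k x := by
        funext x; simp [Matrix.vecMul, dotProduct]
      rw [hvmb2, hbw] at hdm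
      rw [dotProduct, Fin.sum_univ_succ, hφt0 t, one_mul] at hdm
      have hφw : ∑ ip : Fin (m+1), φt t ip.succ * w ip.succ = - w 0 := by
        have := haw
        rw [dotProduct, Fin.sum_univ_succ, hφt0 t, one_mul] at this
        linear_combination this
      have hs : ∑ ip : Fin (m+1), φt t ip.succ * B.mulVec w ip.succ
          = α * ∑ ip : Fin (m+1), φt t ip.succ * w ip.succ := by
        rw [Finset.mul_sum]
        exact Finset.sum_congr rfl (fun ip _ => by rw [hrow ip]; ring)
      rw [hs, hφw] at hdm
      linear_combination hdm
    have hBw : (B - α • 1).mulVec w = 0 := by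
      funext x
      rw [Matrix.sub_mulVec, Matrix.smul_mulVec, Matrix.one_mulVec]
      have : B.mulVec w x = α * w x := by
        induction x using Fin.cases with
        | zero => exact hzero
        | succ j => exact hrow j
      simp [this]
    have hdet0 : (B - α • 1).det = 0 :=
      (Matrix.exists_mulVec_eq_zero_iff).mp ⟨w, hw0, hBw⟩
    rw [Polynomial.IsRoot.def, hpeval α]
    exact hdet0
  -- finiteness and choice of good t
  set S : Set ℂ := {t | ∃ α, α ≠ 1 ∧ cond t α} with hS
  have hSfin : S.Finite := by
    have hsub : S ⊆ ⋃ α ∈ {α : ℂ | p.IsRoot α}, {t : ℂ | cond t α} := by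
      rintro t ⟨α, hα1, hcond⟩
      exact Set.mem_biUnion (hroot t α hcond) hcond
    exact ((Polynomial.finite_setOf_isRoot hp0).biUnion
      (fun α _ => (huniq α).finite)).subset hsub
  obtain ⟨t, ht⟩ := hSfin.infinite_compl.nonempty
  refine ⟨φt t, hφt0 t, hφtu t, ?_⟩
  intro α hα1 _ hcond
  exact ht ⟨α, hα1, hcond⟩

theorem key : ∀ (n : ℕ) (B : Matrix (Fin n) (Fin n) ℂ), B.det = 1 →
    (B = 1 ∨ ¬ ∃ α : ℂ, B = α • 1) →
    ∃ P L U : Matrix (Fin n) (Fin n) ℂ,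
      IsUnit P.det ∧
      (∀ i j : Fin n, i < j → L i j = 0) ∧ (∀ i, L i i = 1) ∧
      (∀ i j : Fin n, j < i → U i j = 0) ∧ (∀ i, U i i = 1) ∧
      P * B * P⁻¹ = L * U := by
  intro n
  induction n with
  | zero =>
    intro B _ _
    exact ⟨1, 1, 1, by simp, fun i => i.elim0, fun i => i.elim0, fun i => i.elim0,
      fun i => i.elim0, Subsingleton.elim _ _⟩
  | succ n IH =>
    intro B hdet hns
    rcases hns with h1 | hns
    · refine ⟨1, 1, 1, by simp, fun i j h => Matrix.one_apply_ne (ne_of_lt h),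
        fun i => Matrix.one_apply_eq i, fun i j h => Matrix.one_apply_ne (ne_of_gt h),
        fun i => Matrix.one_apply_eq i, ?_⟩
      rw [h1]
      simp [inv_one]
    rcases Nat.eq_zero_or_pos n with rfl | hn
    · exfalso
      apply hns
      refine ⟨B 0 0, ?_⟩
      ext i j
      fin_cases i <;> fin_cases j <;> simp [Matrix.one_apply]
    obtain ⟨m, rfl⟩ : ∃ m, n = m + 1 := ⟨n - 1, by omega⟩
    -- MAIN CASE : B : Matrix (Fin (m+2)) (Fin (m+2)) ℂ, nonscalar, det 1
    obtain ⟨C₁, C₁i, hC₁a, hC₁b, i₁, hi₁, hne⟩ := exists_conj_noneigen B hns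
    set B₁ : Matrix (Fin (m+2)) (Fin (m+2)) ℂ := C₁i * B * C₁ with hB₁def
    have hCdets : C₁i.det * C₁.det = 1 := by
      rw [← Matrix.det_mul, hC₁b, Matrix.det_one]
    have hdet₁ : B₁.det = 1 := by
      rw [hB₁def, Matrix.det_mul, Matrix.det_mul]
      calc C₁i.det * B.det * C₁.det = C₁i.det * C₁.det * B.det := by ring
        _ = 1 := by rw [hCdets, hdet, one_mul]
    obtain ⟨φ, hφ0, hφu, hgood⟩ := choice_lemma m B₁ hdet₁ i₁ hi₁ hne
    -- blocks of B₁
    set β : Matrix (Fin 1) (Fin 1) ℂ := Matrix.of fun _ _ => B₁ 0 0 with hβ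
    set r : Matrix (Fin 1) (Fin (m+1)) ℂ := Matrix.of fun _ j => B₁ 0 j.succ with hr
    set uc : Matrix (Fin (m+1)) (Fin 1) ℂ := Matrix.of fun i _ => B₁ i.succ 0 with huc
    set B' : Matrix (Fin (m+1)) (Fin (m+1)) ℂ := Matrix.of fun i j => B₁ i.succ j.succ with hB'
    have hB₁blk : B₁ = rx (fromBlocks β r uc B') := by
      ext i j
      rw [rx_apply]
      induction i using Fin.cases with
      | zero =>
        induction j using Fin.cases with
        | zero => simp [hβ]
        | succ k => simp [hr]
      | succ l =>
        induction j using Fin.cases with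
        | zero => simp [huc]
        | succ k => simp [hB']
    set ψ : Matrix (Fin 1) (Fin (m+1)) ℂ := Matrix.of fun _ j => φ j.succ with hψ
    set R : Matrix (Fin (m+2)) (Fin (m+2)) ℂ := rx (fromBlocks 1 ψ 0 1) with hRdef
    set Ri : Matrix (Fin (m+2)) (Fin (m+2)) ℂ := rx (fromBlocks 1 (-ψ) 0 1) with hRidef
    have hRRi : R * Ri = 1 := by
      rw [hRdef, hRidef, rx_mul, fromBlocks_multiply]
      simp
    have hRiR : Ri * R = 1 := by
      rw [hRdef, hRidef, rx_mul, fromBlocks_multiply]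
      simp
    set B₂ : Matrix (Fin (m+2)) (Fin (m+2)) ℂ := R * B₁ * Ri with hB₂def
    have hTL : β + ψ * uc = 1 := by
      ext i j
      have hi : i = 0 := Subsingleton.elim i 0
      have hj : j = 0 := Subsingleton.elim j 0
      subst hi; subst hj
      have hφu' := hφu
      rw [dotProduct, Fin.sum_univ_succ, hφ0, one_mul] at hφu'
      simp only [Matrix.add_apply, Matrix.mul_apply, hβ, hψ, huc, Matrix.of_apply,
        Matrix.one_apply_eq]
      exact hφu'
    set X : Matrix (Fin 1) (Fin (m+1)) ℂ := r + ψ * B' - ψ with hX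
    set Z : Matrix (Fin (m+1)) (Fin (m+1)) ℂ := B' - uc * ψ with hZ
    have hB₂blk : B₂ = rx (fromBlocks 1 X uc Z) := by
      rw [hB₂def, hB₁blk, hRdef, hRidef, rx_mul, rx_mul]
      congr 1
      rw [fromBlocks_multiply, fromBlocks_multiply]
      have e1 : (1 : Matrix (Fin 1) (Fin 1) ℂ) * β + ψ * uc = 1 := by rw [Matrix.one_mul]; exact hTL
      simp only [Matrix.one_mul, Matrix.mul_one, Matrix.zero_mul, Matrix.mul_zero,
        add_zero, zero_add, Matrix.mul_neg, Matrix.neg_mul]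
      rw [hTL, Matrix.one_mul]
      have h1 : -ψ + (r + ψ * B') = X := by rw [hX]; abel
      have h2 : -(uc * ψ) + B' = Z := by rw [hZ]; abel
      rw [h1, h2]
    set M : Matrix (Fin (m+1)) (Fin (m+1)) ℂ := Z - uc * X with hM
    have hZfact : uc * X + M = Z := by rw [hM]; abel
    have hfact : (fromBlocks 1 X uc Z : Matrix (Fin 1 ⊕ Fin (m+1)) (Fin 1 ⊕ Fin (m+1)) ℂ)
        = fromBlocks 1 0 uc 1 * fromBlocks 1 X 0 M := by
      rw [fromBlocks_multiply]
      simp only [Matrix.one_mul, Matrix.mul_one, Matrix.zero_mul, Matrix.mul_zero,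
        add_zero, zero_add]
      rw [hZfact]
    have hdet₂ : B₂.det = 1 := by
      have hRdets : R.det * Ri.det = 1 := by
        rw [← Matrix.det_mul, hRRi, Matrix.det_one]
      rw [hB₂def, Matrix.det_mul, Matrix.det_mul]
      calc R.det * B₁.det * Ri.det = R.det * Ri.det * B₁.det := by ring
        _ = 1 := by rw [hRdets, hdet₁, one_mul]
    have hMdet : M.det = 1 := by
      have h1 : B₂.det = M.det := by
        rw [hB₂blk, rx_det, hfact, Matrix.det_mul, Matrix.det_fromBlocks_zero₁₂,
          Matrix.det_fromBlocks_zero₂₁]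
        simp
      rw [← h1, hdet₂]
    have hMentry : ∀ i j : Fin (m+1),
        M i j = B₁ i.succ j.succ - B₁ i.succ 0 * (φ ⬝ᵥ fun k => B₁ k j.succ) := by
      intro i j
      have hdp : (φ ⬝ᵥ fun k => B₁ k j.succ)
          = B₁ 0 j.succ + ∑ l : Fin (m+1), φ l.succ * B₁ l.succ j.succ := by
        rw [dotProduct, Fin.sum_univ_succ, hφ0, one_mul]
      rw [hM, hZ, hX, hdp]
      simp only [Matrix.sub_apply, Matrix.mul_apply, Matrix.add_apply, hB', huc, hψ, hr,
        Matrix.of_apply, Fin.sum_univ_one]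
      ring
    have hM1 : M = 1 ∨ ¬ ∃ α : ℂ, M = α • 1 := by
      by_cases hsc : ∃ α : ℂ, M = α • 1
      · obtain ⟨α, hα⟩ := hsc
        have hαn : α ^ (m+1) = 1 := by
          have hd : M.det = α ^ (m+1) := by
            rw [hα, Matrix.det_smul, Matrix.det_one, mul_one, Fintype.card_fin]
          rw [hMdet] at hd
          exact hd.symm
        rcases eq_or_ne α 1 with rfl | hα1
        · left; rw [hα, one_smul]
        · exfalso
          apply hgood α hα1 hαn
          intro i j
          rw [← hMentry i j, hα]
          simp [Matrix.smul_apply, Matrix.one_apply]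
      · right; exact hsc
    obtain ⟨Q, L', U', hQ, hL'low, hL'diag, hU'up, hU'diag, hQM⟩ := IH M hMdet hM1
    have hQQi : Q * Q⁻¹ = 1 := Matrix.mul_nonsing_inv Q hQ
    have hQiQ : Q⁻¹ * Q = 1 := Matrix.nonsing_inv_mul Q hQ
    set Qi : Matrix (Fin (m+1)) (Fin (m+1)) ℂ := Q⁻¹ with hQidef
    set Qh : Matrix (Fin (m+2)) (Fin (m+2)) ℂ := rx (fromBlocks 1 0 0 Q) with hQh
    set Qhi : Matrix (Fin (m+2)) (Fin (m+2)) ℂ := rx (fromBlocks 1 0 0 Qi) with hQhi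
    have hQh1 : Qh * Qhi = 1 := by
      rw [hQh, hQhi, rx_mul, fromBlocks_multiply]
      simp [hQQi]
    have hQh2 : Qhi * Qh = 1 := by
      rw [hQh, hQhi, rx_mul, fromBlocks_multiply]
      simp [hQiQ]
    set L : Matrix (Fin (m+2)) (Fin (m+2)) ℂ := rx (fromBlocks 1 0 (Q * uc) L') with hL
    set U : Matrix (Fin (m+2)) (Fin (m+2)) ℂ := rx (fromBlocks 1 (X * Qi) 0 U') with hU
    have hfinal : Qh * B₂ * Qhi = L * U := by
      rw [hB₂blk, hQh, hQhi, hL, hU, rx_mul, rx_mul, rx_mul]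
      congr 1
      rw [fromBlocks_multiply, fromBlocks_multiply, fromBlocks_multiply]
      have hZQ : Q * Z * Qi = Q * uc * (X * Qi) + L' * U' := by
        rw [← hQM, ← hZfact, mul_add, add_mul, ← Matrix.mul_assoc Q uc X, Matrix.mul_assoc (Q * uc) X Qi]
      simp only [Matrix.one_mul, Matrix.mul_one, Matrix.zero_mul, Matrix.mul_zero,
        add_zero, zero_add]
      rw [hZQ]
    set P : Matrix (Fin (m+2)) (Fin (m+2)) ℂ := Qh * R * C₁i with hP
    have hPinv : P * (C₁ * Ri * Qhi) = 1 := by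
      rw [hP]
      simp only [mul_assoc]
      rw [← mul_assoc C₁i C₁, hC₁b, Matrix.one_mul, ← mul_assoc R Ri, hRRi, Matrix.one_mul, hQh1]
    have hPB : P * B * (C₁ * Ri * Qhi) = L * U := by
      rw [hB₂def, hB₁def] at hfinal
      rw [hP, ← hfinal]
      simp only [mul_assoc]
    have hPiv : P⁻¹ = C₁ * Ri * Qhi := Matrix.inv_eq_right_inv hPinv
    refine ⟨P, L, U, Matrix.isUnit_det_of_right_inverse hPinv,
      (rx_lower hL'low hL'diag).1, (rx_lower hL'low hL'diag).2,
      (rx_upper hU'up hU'diag).1, (rx_upper hU'up hU'diag).2, ?_⟩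
    rw [hPiv]
    exact hPB


end Stmt15

theorem stmt_15 {n : ℕ} (A : Matrix (Fin n) (Fin n) ℂ)
    (hA : A.det = 1) (hns : ¬ ∃ α : ℂ, A = α • (1 : Matrix (Fin n) (Fin n) ℂ)) :
    ∃ P L U : Matrix (Fin n) (Fin n) ℂ,
      IsUnit P.det ∧
      (∀ i j : Fin n, i < j → L i j = 0) ∧ (∀ i, L i i = 1) ∧
      (∀ i j : Fin n, j < i → U i j = 0) ∧ (∀ i, U i i = 1) ∧
      P * A * P⁻¹ = L * U :=
  Stmt15.key n A hA (Or.inr hns)
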